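/- Let n ≥ 2. For a function f defined on ordered pairs (i, j) of distinct elements of Fin n with values in ℝ, the following are equivalent: (a) f is an expert-graph edge-weight function, i.e. there exist a nonempty finite type U, a probability distribution d on U, and for each u ∈ U a positive probability vector p_u on Fin n such that f(i,j) = Σ_{u ∈ U} d(u) · p_u(i)/(p_u(i) + p_u(j)) for all i ≠ j; (b) there exists a function w from the permutations of Fin n to ℝ with w(σ) > 0 for every permutation σ and Σ_σ w(σ) = 1, such that f(i,j) = Σ_σ w(σ) · [σ⁻¹(i) < σ⁻¹(j)] for all i ≠ j (where [·] is the 0/1 indicator). -/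

import Mathlib

open Equiv Finset Filter Topology Matrix

noncomputable def PL : ∀ {n : ℕ}, (Fin n → ℝ) → Equiv.Perm (Fin n) → ℝ
  | 0, _, _ => 1
  | _+1, p, σ =>
      (p (σ 0) / ∑ x, p x) *
        PL (fun i => p (Equiv.swap 0 (σ 0) i.succ)) (Equiv.Perm.decomposeFin σ).2

/-- the embedding Fin n → Fin (n+1) avoiding `a` -/
def emb {n : ℕ} (a : Fin (n+1)) (i : Fin n) : Fin (n+1) := Equiv.swap 0 a i.succ

lemma emb_ne {n : ℕ} (a : Fin (n+1)) (i : Fin n) : emb a i ≠ a := by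
  intro h
  have := (Equiv.swap 0 a).injective (h.trans (Equiv.swap_apply_left 0 a).symm)
  exact (Fin.succ_ne_zero i) this

lemma emb_inj {n : ℕ} (a : Fin (n+1)) : Function.Injective (emb a) := by
  intro i j h
  exact Fin.succ_injective _ ((Equiv.swap 0 a).injective h)

lemma emb_surj {n : ℕ} (a : Fin (n+1)) {x : Fin (n+1)} (hx : x ≠ a) :
    ∃ i, emb a i = x := by
  have h0 : Equiv.swap 0 a x ≠ 0 := by
    intro h
    exact hx ((Equiv.swap 0 a).injective (h.trans (Equiv.swap_apply_right 0 a).symm))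
  refine ⟨(Equiv.swap 0 a x).pred h0, ?_⟩
  simp [emb]

lemma pos_emb {n : ℕ} (σ : Equiv.Perm (Fin (n+1))) (a : Fin (n+1)) (τ : Equiv.Perm (Fin n))
    (hσ : σ = Equiv.Perm.decomposeFin.symm (a, τ)) (k : Fin n) :
    σ⁻¹ (emb a k) = (τ⁻¹ k).succ := by
  have : σ ((τ⁻¹ k).succ) = emb a k := by
    rw [hσ, Equiv.Perm.decomposeFin_symm_apply_succ]
    simp [emb]
  rw [← this]; simp

lemma pos_a {n : ℕ} (σ : Equiv.Perm (Fin (n+1))) (a : Fin (n+1)) (τ : Equiv.Perm (Fin n))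
    (hσ : σ = Equiv.Perm.decomposeFin.symm (a, τ)) : σ⁻¹ a = 0 := by
  have : σ 0 = a := by rw [hσ]; exact Equiv.Perm.decomposeFin_symm_apply_zero a τ
  rw [← this]; simp

lemma PL_decomp {n : ℕ} (p : Fin (n+1) → ℝ) (a : Fin (n+1)) (τ : Equiv.Perm (Fin n)) :
    PL p (Equiv.Perm.decomposeFin.symm (a, τ)) =
      (p a / ∑ x, p x) * PL (fun i => p (emb a i)) τ := by
  have h0 : (Equiv.Perm.decomposeFin.symm (a, τ)) 0 = a :=
    Equiv.Perm.decomposeFin_symm_apply_zero a τ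
  have h1 : Equiv.Perm.decomposeFin (Equiv.Perm.decomposeFin.symm (a, τ)) = (a, τ) :=
    Equiv.apply_symm_apply _ _
  rw [PL, h0, h1]
  rfl

lemma PL_pos : ∀ {n : ℕ} (p : Fin n → ℝ), (∀ i, 0 < p i) → ∀ σ, 0 < PL p σ
  | 0, p, hp, σ => one_pos
  | n+1, p, hp, σ => by
    rw [PL]
    have hs : 0 < ∑ x, p x := Finset.sum_pos (fun i _ => hp i) ⟨0, by simp⟩
    exact mul_pos (div_pos (hp _) hs) (PL_pos _ (fun i => hp _) _)

lemma PL_sum : ∀ {n : ℕ} (p : Fin n → ℝ), (∀ i, 0 < p i) → ∑ σ, PL p σ = 1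
  | 0, p, hp => by simp [PL]
  | n+1, p, hp => by
    have hs : 0 < ∑ x, p x := Finset.sum_pos (fun i _ => hp i) ⟨0, by simp⟩
    rw [← Equiv.Perm.decomposeFin.symm.sum_comp (fun σ => PL p σ), Fintype.sum_prod_type]
    simp only [PL_decomp]
    have : ∀ a : Fin (n+1), ∑ τ : Equiv.Perm (Fin n),
        (p a / ∑ x, p x) * PL (fun i => p (emb a i)) τ = p a / ∑ x, p x := by
      intro a
      rw [← Finset.mul_sum, PL_sum (fun i => p (emb a i)) (fun i => hp _), mul_one]
    rw [Finset.sum_congr rfl (fun a _ => this a), ← Finset.sum_div, div_self hs.ne']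

lemma PL_marginal : ∀ {n : ℕ} (p : Fin n → ℝ), (∀ i, 0 < p i) → ∀ i j : Fin n, i ≠ j →
    ∑ σ, PL p σ * (if σ⁻¹ i < σ⁻¹ j then (1:ℝ) else 0) = p i / (p i + p j)
  | 0, p, hp, i, j, hij => i.elim0
  | n+1, p, hp, i, j, hij => by
    have hP : 0 < ∑ x, p x := Finset.sum_pos (fun x _ => hp x) ⟨0, by simp⟩
    have hij' : 0 < p i + p j := add_pos (hp i) (hp j)
    set P := ∑ x, p x with hPdef
    set r := p i / (p i + p j) with hrdef
    set F := fun σ : Equiv.Perm (Fin (n+1)) =>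
      PL p σ * (if σ⁻¹ i < σ⁻¹ j then (1:ℝ) else 0) with hF
    have key : ∀ a : Fin (n+1), ∑ τ : Equiv.Perm (Fin n),
        F (Equiv.Perm.decomposeFin.symm (a, τ)) =
        if a = i then p i / P else if a = j then 0 else p a / P * r := by
      intro a
      by_cases hai : a = i
      · subst hai
        rw [if_pos rfl]
        have : ∀ τ : Equiv.Perm (Fin n), F (Equiv.Perm.decomposeFin.symm (a, τ)) =
            (p a / P) * PL (fun i => p (emb a i)) τ := by
          intro τ
          have h1 : (Equiv.Perm.decomposeFin.symm (a, τ))⁻¹ a = 0 := pos_a _ a τ rfl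
          obtain ⟨kj, hkj⟩ := emb_surj a (Ne.symm hij)
          have h2 : (Equiv.Perm.decomposeFin.symm (a, τ))⁻¹ j = (τ⁻¹ kj).succ := by
            rw [← hkj]; exact pos_emb _ a τ rfl kj
          have hlt : (Equiv.Perm.decomposeFin.symm (a, τ))⁻¹ a
              < (Equiv.Perm.decomposeFin.symm (a, τ))⁻¹ j := by
            rw [h1, h2]; exact Fin.succ_pos _
          simp only [hF]
          rw [if_pos hlt, mul_one, PL_decomp, ← hPdef]
        rw [Finset.sum_congr rfl (fun τ _ => this τ), ← Finset.mul_sum,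
          PL_sum _ (fun k => hp (emb a k)), mul_one]
      · by_cases haj : a = j
        · subst haj
          rw [if_neg hai, if_pos rfl]
          have : ∀ τ : Equiv.Perm (Fin n), F (Equiv.Perm.decomposeFin.symm (a, τ)) = 0 := by
            intro τ
            have h1 : (Equiv.Perm.decomposeFin.symm (a, τ))⁻¹ a = 0 := pos_a _ a τ rfl
            have hlt : ¬ ((Equiv.Perm.decomposeFin.symm (a, τ))⁻¹ i
                < (Equiv.Perm.decomposeFin.symm (a, τ))⁻¹ a) := by
              rw [h1]; exact Fin.not_lt_zero _
            simp only [hF]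
            rw [if_neg hlt, mul_zero]
          rw [Finset.sum_congr rfl (fun τ _ => this τ), Finset.sum_const, smul_zero]
        · rw [if_neg hai, if_neg haj]
          obtain ⟨ki, hki⟩ := emb_surj a (fun h => hai h.symm : i ≠ a)
          obtain ⟨kj, hkj⟩ := emb_surj a (fun h => haj h.symm : j ≠ a)
          have hkij : ki ≠ kj := fun h => hij (by rw [← hki, ← hkj, h])
          have : ∀ τ : Equiv.Perm (Fin n), F (Equiv.Perm.decomposeFin.symm (a, τ)) =
              (p a / P) * (PL (fun i => p (emb a i)) τ *
                (if τ⁻¹ ki < τ⁻¹ kj then (1:ℝ) else 0)) := by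
            intro τ
            have h2 : (Equiv.Perm.decomposeFin.symm (a, τ))⁻¹ i = (τ⁻¹ ki).succ := by
              rw [← hki]; exact pos_emb _ a τ rfl ki
            have h3 : (Equiv.Perm.decomposeFin.symm (a, τ))⁻¹ j = (τ⁻¹ kj).succ := by
              rw [← hkj]; exact pos_emb _ a τ rfl kj
            have hiff : ((Equiv.Perm.decomposeFin.symm (a, τ))⁻¹ i
                < (Equiv.Perm.decomposeFin.symm (a, τ))⁻¹ j) ↔ (τ⁻¹ ki < τ⁻¹ kj) := by
              rw [h2, h3, Fin.succ_lt_succ_iff]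
            simp only [hF]
            rw [PL_decomp, ← hPdef]
            by_cases hc : τ⁻¹ ki < τ⁻¹ kj
            · rw [if_pos hc, if_pos (hiff.2 hc)]; ring
            · rw [if_neg hc, if_neg (fun h => hc (hiff.1 h))]; ring
          rw [Finset.sum_congr rfl (fun τ _ => this τ), ← Finset.mul_sum,
            PL_marginal (fun k => p (emb a k)) (fun k => hp (emb a k)) ki kj hkij,
            hki, hkj]
    have hsum : ∑ σ, F σ = ∑ a : Fin (n+1), ∑ τ : Equiv.Perm (Fin n),
        F (Equiv.Perm.decomposeFin.symm (a, τ)) := by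
      rw [← Equiv.Perm.decomposeFin.symm.sum_comp F, Fintype.sum_prod_type]
    rw [hsum, Finset.sum_congr rfl (fun a _ => key a)]
    -- now compute the outer sum
    have hji : j ≠ i := Ne.symm hij
    set g := fun a : Fin (n+1) => if a = i then p i / P else if a = j then 0 else p a / P * r
      with hg
    have e1 : ∑ a, g a = g i + ∑ a ∈ Finset.univ.erase i, g a :=
      (Finset.add_sum_erase _ g (Finset.mem_univ i)).symm
    have e2 : ∑ a ∈ Finset.univ.erase i, g a
        = g j + ∑ a ∈ (Finset.univ.erase i).erase j, g a :=
      (Finset.add_sum_erase _ g (Finset.mem_erase.2 ⟨hji, Finset.mem_univ j⟩)).symm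
    have e3 : ∑ a ∈ (Finset.univ.erase i).erase j, g a
        = (∑ a ∈ (Finset.univ.erase i).erase j, p a) / P * r := by
      rw [Finset.sum_div, Finset.sum_mul]
      refine Finset.sum_congr rfl (fun a ha => ?_)
      obtain ⟨haj, hai⟩ : a ≠ j ∧ a ≠ i := by
        simpa [Finset.mem_erase] using ha
      rw [hg]; simp only [if_neg hai, if_neg haj]
    have e4 : ∑ a ∈ (Finset.univ.erase i).erase j, p a = P - p i - p j := by
      have : ∑ a ∈ Finset.univ.erase i, p a = P - p i := by
        rw [hPdef, eq_sub_iff_add_eq, Finset.sum_erase_add _ _ (Finset.mem_univ i)]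
      rw [eq_sub_iff_add_eq, Finset.sum_erase_add _ _
        (Finset.mem_erase.2 ⟨hji, Finset.mem_univ j⟩), this]
    have gi : g i = p i / P := by rw [hg]; simp
    have gj : g j = 0 := by rw [hg]; simp [hji]
    rw [e1, e2, e3, e4, gi, gj, hrdef]
    field_simp
    ring

/-- scale invariance of `PL`. -/
lemma PL_smul : ∀ {n : ℕ} (c : ℝ), c ≠ 0 → ∀ (p : Fin n → ℝ) (σ : Equiv.Perm (Fin n)),
    PL (fun i => c * p i) σ = PL p σ
  | 0, c, hc, p, σ => rfl
  | n+1, c, hc, p, σ => by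
    rw [PL, PL, ← Finset.mul_sum, mul_div_mul_left _ _ hc, PL_smul c hc]

/-- the geometric score vector associated to a ranking. -/
noncomputable def q {n : ℕ} (σ : Equiv.Perm (Fin n)) (t : ℝ) (i : Fin n) : ℝ :=
  t ^ ((σ⁻¹ i : Fin n) : ℕ)

lemma q_pos {n : ℕ} (σ : Equiv.Perm (Fin n)) {t : ℝ} (ht : 0 < t) (i : Fin n) :
    0 < q σ t i := pow_pos ht _

/-- the diagonal value `PL (q σ t) σ`. -/
noncomputable def D : ℕ → ℝ → ℝ
  | 0, _ => 1
  | (n+1), t => D n t / (∑ k ∈ Finset.range (n+1), t ^ k)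

lemma q_sum {n : ℕ} (σ : Equiv.Perm (Fin n)) (t : ℝ) :
    ∑ i, q σ t i = ∑ k ∈ Finset.range n, t ^ k := by
  rw [← Fin.sum_univ_eq_sum_range (fun k => t ^ k)]
  exact (Fintype.sum_equiv σ (fun k => t ^ (k:ℕ)) (fun i => q σ t i)
    (fun k => by simp [q])).symm

lemma PL_q_diag : ∀ {n : ℕ} {t : ℝ}, 0 < t → ∀ (σ : Equiv.Perm (Fin n)),
    PL (q σ t) σ = D n t
  | 0, t, ht, σ => rfl
  | n+1, t, ht, σ => by
    rcases e : Equiv.Perm.decomposeFin σ with ⟨a, τ⟩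
    have hσ : σ = Equiv.Perm.decomposeFin.symm (a, τ) := by
      rw [← e, Equiv.symm_apply_apply]
    have h1 : q σ t a = 1 := by
      rw [q, pos_a σ a τ hσ]; simp
    have h2 : (fun k => q σ t (emb a k)) = fun k => t * q τ t k := by
      funext k
      rw [q, pos_emb σ a τ hσ k, q, Fin.val_succ, pow_succ]
      ring
    calc PL (q σ t) σ = (q σ t a / ∑ x, q σ t x) * PL (fun k => q σ t (emb a k)) τ := by
          rw [hσ, PL_decomp]
      _ = D (n+1) t := by
          rw [h1, h2, PL_smul t ht.ne', PL_q_diag ht τ, q_sum, D]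
          rw [one_div, div_eq_mul_inv, mul_comm]

lemma D_tendsto (n : ℕ) : Tendsto (fun t => D n t) (𝓝[>] (0:ℝ)) (𝓝 1) := by
  induction n with
  | zero => simp only [D]; exact tendsto_const_nhds
  | succ n ih =>
    have hS : Tendsto (fun t : ℝ => ∑ k ∈ Finset.range (n+1), t ^ k) (𝓝[>] (0:ℝ)) (𝓝 1) := by
      have hc : Continuous (fun t : ℝ => ∑ k ∈ Finset.range (n+1), t ^ k) := by
        continuity
      have h0 : (∑ k ∈ Finset.range (n+1), (0:ℝ) ^ k) = 1 := by
        rw [Finset.sum_eq_single 0] <;> simp +contextual [Nat.pos_iff_ne_zero]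
      have := hc.tendsto 0
      rw [h0] at this
      exact this.mono_left nhdsWithin_le_nhds
    simpa only [D, div_one, Pi.div_def] using ih.div hS one_ne_zero

/-- **Theorem 1 (Expert graphs = interior of the linear ordering polytope).**
For `n ≥ 2` and `f` on ordered pairs of distinct elements of `Fin n`, `f` arises as the
edge-weight function of an expert graph (a mixture over a nonempty finite set of states of
pairwise opinions of positive probability vectors) if and only if `f` arises as a strictly
positive convex combination of ranking indicators. -/
theorem expert_graphs_eq_interior_linear_ordering_polytope
    (n : ℕ) (hn : 2 ≤ n) (f : Fin n → Fin n → ℝ) :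
    (∃ (U : Type) (_ : Fintype U), Nonempty U ∧
      ∃ (d : U → ℝ) (p : U → Fin n → ℝ),
        (∀ u, 0 ≤ d u) ∧ (∑ u, d u = 1) ∧
        (∀ u i, 0 < p u i) ∧ (∀ u, ∑ i, p u i = 1) ∧
        (∀ i j : Fin n, i ≠ j →
          f i j = ∑ u, d u * (p u i / (p u i + p u j)))) ↔
    (∃ w : Equiv.Perm (Fin n) → ℝ,
      (∀ σ, 0 < w σ) ∧ (∑ σ, w σ = 1) ∧
      (∀ i j : Fin n, i ≠ j →
        f i j = ∑ σ, w σ * (if σ⁻¹ i < σ⁻¹ j then (1 : ℝ) else 0))) := by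
  constructor
  · rintro ⟨U, instU, ⟨u₀⟩, d, p, hd0, hd1, hp, hp1, hf⟩
    obtain ⟨u₁, hu₁⟩ : ∃ u, 0 < d u := by
      by_contra h
      push_neg at h
      have : (∑ u, d u) ≤ 0 := Finset.sum_nonpos (fun u _ => h u)
      linarith [hd1]
    refine ⟨fun σ => ∑ u, d u * PL (p u) σ, ?_, ?_, ?_⟩
    · intro σ
      refine Finset.sum_pos' (fun u _ => mul_nonneg (hd0 u) (PL_pos (p u) (hp u) σ).le)
        ⟨u₁, Finset.mem_univ u₁, mul_pos hu₁ (PL_pos (p u₁) (hp u₁) σ)⟩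
    · rw [Finset.sum_comm]
      calc ∑ u : U, ∑ σ, d u * PL (p u) σ = ∑ u : U, d u := by
            refine Finset.sum_congr rfl (fun u _ => ?_)
            rw [← Finset.mul_sum, PL_sum (p u) (hp u), mul_one]
        _ = 1 := hd1
    · intro i j hij
      rw [hf i j hij]
      have step : ∀ σ : Equiv.Perm (Fin n),
          (∑ u, d u * PL (p u) σ) * (if σ⁻¹ i < σ⁻¹ j then (1:ℝ) else 0)
          = ∑ u, d u * (PL (p u) σ * (if σ⁻¹ i < σ⁻¹ j then (1:ℝ) else 0)) := by
        intro σ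
        rw [Finset.sum_mul]
        exact Finset.sum_congr rfl fun u _ => mul_assoc _ _ _
      rw [Finset.sum_congr rfl (fun σ _ => step σ), Finset.sum_comm]
      exact Finset.sum_congr rfl fun u _ => by
        rw [← Finset.mul_sum, PL_marginal (p u) (hp u) i j hij]
  · rintro ⟨w, hw0, hw1, hwf⟩
    -- the matrix of PL-probabilities for geometric score vectors
    set A : ℝ → Matrix (Equiv.Perm (Fin n)) (Equiv.Perm (Fin n)) ℝ :=
      fun t τ σ => PL (q σ t) τ with hA
    have hAlim : Tendsto A (𝓝[>] (0:ℝ)) (𝓝 (1 : Matrix _ _ ℝ)) := by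
      refine tendsto_pi_nhds.2 ?_
      intro τ
      refine tendsto_pi_nhds.2 ?_
      intro σ
      by_cases hτσ : τ = σ
      · subst hτσ
        rw [Matrix.one_apply_eq]
        refine (D_tendsto n).congr' ?_
        filter_upwards [self_mem_nhdsWithin] with t ht
        exact (PL_q_diag ht τ).symm
      · rw [Matrix.one_apply_ne hτσ]
        have hub : Tendsto (fun t : ℝ => 1 - D n t) (𝓝[>] (0:ℝ)) (𝓝 0) := by
          have := (tendsto_const_nhds (x := (1:ℝ))).sub (D_tendsto n)
          simpa using this
        refine tendsto_of_tendsto_of_tendsto_of_le_of_le' tendsto_const_nhds hub ?_ ?_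
        · filter_upwards [self_mem_nhdsWithin] with t ht
          exact (PL_pos (q σ t) (q_pos σ ht) τ).le
        · filter_upwards [self_mem_nhdsWithin] with t ht
          have hsum := PL_sum (q σ t) (q_pos σ ht)
          have hdiag := PL_q_diag ht σ
          have herase : ∑ τ' ∈ Finset.univ.erase σ, PL (q σ t) τ' = 1 - D n t := by
            rw [eq_sub_iff_add_eq, ← hdiag, Finset.sum_erase_add _ _ (Finset.mem_univ σ), hsum]
          rw [hA]
          calc PL (q σ t) τ ≤ ∑ τ' ∈ Finset.univ.erase σ, PL (q σ t) τ' :=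
                Finset.single_le_sum (fun τ' _ => (PL_pos (q σ t) (q_pos σ ht) τ').le)
                  (Finset.mem_erase.2 ⟨hτσ, Finset.mem_univ τ⟩)
            _ = 1 - D n t := herase
    have hdet : Tendsto (fun t => (A t).det) (𝓝[>] (0:ℝ)) (𝓝 1) := by
      have hc : Continuous fun M : Matrix (Equiv.Perm (Fin n)) (Equiv.Perm (Fin n)) ℝ =>
          M.det := Continuous.matrix_det continuous_id
      have := (hc.tendsto 1).comp hAlim
      simpa [Function.comp_def] using this
    set x : ℝ → Equiv.Perm (Fin n) → ℝ :=
      fun t => (A t).det⁻¹ • ((A t).adjugate *ᵥ w) with hx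
    have hxlim : Tendsto x (𝓝[>] (0:ℝ)) (𝓝 w) := by
      have hadjc : Continuous fun M : Matrix (Equiv.Perm (Fin n)) (Equiv.Perm (Fin n)) ℝ =>
          M.adjugate *ᵥ w :=
        Continuous.matrix_mulVec (Continuous.matrix_adjugate continuous_id) continuous_const
      have hadj : Tendsto (fun t => (A t).adjugate *ᵥ w) (𝓝[>] (0:ℝ))
          (𝓝 ((1 : Matrix _ _ ℝ).adjugate *ᵥ w)) := (hadjc.tendsto 1).comp hAlim
      have := (hdet.inv₀ one_ne_zero).smul hadj
      simpa [Matrix.adjugate_one, Matrix.one_mulVec] using this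
    have h0 : ∀ᶠ t in 𝓝[>] (0:ℝ), t ∈ Set.Ioi (0:ℝ) := self_mem_nhdsWithin
    have h1 : ∀ᶠ t in 𝓝[>] (0:ℝ), (A t).det ≠ 0 := hdet.eventually_ne one_ne_zero
    have h2 : ∀ᶠ t in 𝓝[>] (0:ℝ), ∀ σ, 0 < x t σ := by
      refine Filter.eventually_all.2 (fun σ => ?_)
      have : Tendsto (fun t => x t σ) (𝓝[>] (0:ℝ)) (𝓝 (w σ)) :=
        ((continuous_apply σ).tendsto w).comp hxlim
      exact this.eventually (eventually_gt_nhds (hw0 σ))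
    obtain ⟨t, ht0, hdt, hxt⟩ := (h0.and (h1.and h2)).exists
    rw [Set.mem_Ioi] at ht0
    -- A t *ᵥ x t = w
    have hAx : A t *ᵥ x t = w := by
      rw [hx]
      simp only []
      rw [Matrix.mulVec_smul, Matrix.mulVec_mulVec, Matrix.mul_adjugate,
        Matrix.smul_mulVec, Matrix.one_mulVec, smul_smul,
        inv_mul_cancel₀ hdt, one_smul]
    have hwA : ∀ τ, w τ = ∑ σ, A t τ σ * x t σ := by
      intro τ
      rw [← hAx]
      simp [Matrix.mulVec, dotProduct]
    have colsum : ∀ σ, ∑ τ, A t τ σ = 1 := fun σ => PL_sum (q σ t) (q_pos σ ht0)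
    have hsumx : ∑ σ, x t σ = 1 := by
      calc ∑ σ, x t σ = ∑ σ, (∑ τ, A t τ σ) * x t σ :=
            Finset.sum_congr rfl fun σ _ => by rw [colsum σ, one_mul]
        _ = ∑ σ, ∑ τ, A t τ σ * x t σ :=
            Finset.sum_congr rfl fun σ _ => Finset.sum_mul _ _ _
        _ = ∑ τ, ∑ σ, A t τ σ * x t σ := Finset.sum_comm
        _ = ∑ τ, w τ := Finset.sum_congr rfl fun τ _ => (hwA τ).symm
        _ = 1 := hw1
    have hS : ∀ σ : Equiv.Perm (Fin n), 0 < ∑ m, q σ t m := fun σ =>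
      Finset.sum_pos (fun m _ => q_pos σ ht0 m) ⟨⟨0, by omega⟩, Finset.mem_univ _⟩
    refine ⟨Equiv.Perm (Fin n), inferInstance, ⟨1⟩, x t,
      fun σ i => q σ t i / (∑ m, q σ t m), fun σ => (hxt σ).le, hsumx,
      fun σ i => div_pos (q_pos σ ht0 i) (hS σ),
      fun σ => by rw [← Finset.sum_div, div_self (hS σ).ne'], ?_⟩
    intro i j hij
    have hratio : ∀ σ : Equiv.Perm (Fin n),
        q σ t i / (∑ m, q σ t m) / (q σ t i / (∑ m, q σ t m) + q σ t j / (∑ m, q σ t m))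
          = q σ t i / (q σ t i + q σ t j) := by
      intro σ
      rw [← add_div, div_div_div_cancel_right₀]
      exact (hS σ).ne'
    rw [hwf i j hij]
    calc ∑ τ, w τ * (if τ⁻¹ i < τ⁻¹ j then (1:ℝ) else 0)
        = ∑ τ, ∑ σ, x t σ * (A t τ σ * (if τ⁻¹ i < τ⁻¹ j then (1:ℝ) else 0)) := by
          refine Finset.sum_congr rfl (fun τ _ => ?_)
          rw [hwA τ, Finset.sum_mul]
          exact Finset.sum_congr rfl fun σ _ => by ring
      _ = ∑ σ, x t σ * ∑ τ, A t τ σ * (if τ⁻¹ i < τ⁻¹ j then (1:ℝ) else 0) := by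
          rw [Finset.sum_comm]
          exact Finset.sum_congr rfl fun σ _ => (Finset.mul_sum _ _ _).symm
      _ = ∑ σ : Equiv.Perm (Fin n), x t σ * (q σ t i / (q σ t i + q σ t j)) := by
          refine Finset.sum_congr rfl (fun σ _ => ?_)
          rw [PL_marginal (q σ t) (q_pos σ ht0) i j hij]
      _ = ∑ σ : Equiv.Perm (Fin n), x t σ *
            (q σ t i / (∑ m, q σ t m) /
              (q σ t i / (∑ m, q σ t m) + q σ t j / (∑ m, q σ t m))) := by
          exact Finset.sum_congr rfl fun σ _ => by rw [hratio σ]
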